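/- arXiv:0712.3688 — 3 statements merged into one kernel-verified Lean document; each statement's English description precedes it below -/
import Mathlib

section
/- The Gromov–Hausdorff–Prokhorov distance satisfies the triangle inequality: for any three nonempty compact metric spaces (X,d), (X',d'), (X'',d'') equipped with Borel probability measures μ, μ', μ'', one has d_GHP((X,d,μ),(X'',d'',μ'')) ≤ d_GHP((X,d,μ),(X',d',μ')) + d_GHP((X',d',μ'),(X'',d'',μ'')). -/
open MeasureTheory Set

section GHP

variable {X Y : Type*}

/-- A "glue metric": a metric on the disjoint union `X ⊕ Y` whose restrictions to `X`
and `Y` coincide with the given metrics. -/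
structure IsGlueMetric [MetricSpace X] [MetricSpace Y] (δ : X ⊕ Y → X ⊕ Y → ℝ) : Prop where
  refl : ∀ a, δ a a = 0
  pos : ∀ a b, a ≠ b → 0 < δ a b
  symm : ∀ a b, δ a b = δ b a
  triangle : ∀ a b c, δ a c ≤ δ a b + δ b c
  restr_left : ∀ x x' : X, δ (Sum.inl x) (Sum.inl x') = dist x x'
  restr_right : ∀ y y' : Y, δ (Sum.inr y) (Sum.inr y') = dist y y'

/-- The Hausdorff distance, in `(X ⊕ Y, δ)`, between (the images of) `X` and `Y`:
the infimum of `ε > 0` such that each space is contained in the open `ε`-neighborhood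
of the other. -/
noncomputable def glueHausdorffDist (δ : X ⊕ Y → X ⊕ Y → ℝ) : ℝ :=
  sInf {ε : ℝ | 0 < ε ∧ (∀ x : X, ∃ y : Y, δ (Sum.inl x) (Sum.inr y) < ε) ∧
    (∀ y : Y, ∃ x : X, δ (Sum.inl x) (Sum.inr y) < ε)}

/-- The Prokhorov distance, in `(X ⊕ Y, δ)`, between the pushforwards of `μ` and `ν`:
the infimum of `ε > 0` such that `μ(C) ≤ ν(C^ε) + ε` for every `δ`-closed set `C`,
where `C^ε` is the open `ε`-neighborhood for `δ`. -/
noncomputable def glueProkhorovDist [MeasurableSpace X] [MeasurableSpace Y]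
    (δ : X ⊕ Y → X ⊕ Y → ℝ) (μ : Measure X) (ν : Measure Y) : ℝ :=
  sInf {ε : ℝ | 0 < ε ∧ ∀ C : Set (X ⊕ Y),
    (∀ a ∉ C, ∃ η > 0, ∀ b ∈ C, η ≤ δ a b) →
    μ (Sum.inl ⁻¹' C) ≤ ν (Sum.inr ⁻¹' {a | ∃ b ∈ C, δ a b < ε}) + ENNReal.ofReal ε}

/-- The Gromov–Hausdorff–Prokhorov distance between two metric spaces equipped with
Borel measures: the infimum, over all metrics `δ` on the disjoint union restricting to
the given metrics, of the maximum of the Hausdorff distance between the two spaces and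
the Prokhorov distance between the pushforward measures. -/
noncomputable def ghpDist [MetricSpace X] [MetricSpace Y]
    [MeasurableSpace X] [MeasurableSpace Y] (μ : Measure X) (ν : Measure Y) : ℝ :=
  sInf {r : ℝ | ∃ δ : X ⊕ Y → X ⊕ Y → ℝ, IsGlueMetric δ ∧
    r = max (glueHausdorffDist δ) (glueProkhorovDist δ μ ν)}

end GHP
section Helpers

variable {X Y : Type*} [MetricSpace X] [MetricSpace Y]

lemma IsGlueMetric.nonneg {δ : X ⊕ Y → X ⊕ Y → ℝ} (h : IsGlueMetric δ) (a b : X ⊕ Y) :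
    0 ≤ δ a b := by
  have h1 := h.triangle a b a
  have h2 := h.refl a
  have h3 := h.symm a b
  linarith

lemma IsGlueMetric.abs_sub {δ : X ⊕ Y → X ⊕ Y → ℝ} (h : IsGlueMetric δ) (a b c : X ⊕ Y) :
    |δ a b - δ a c| ≤ δ b c := by
  have h1 := h.triangle a c b
  have h2 := h.triangle a b c
  have h3 := h.symm c b
  rw [abs_sub_le_iff]
  constructor <;> linarith

lemma IsGlueMetric.contLeft {δ : X ⊕ Y → X ⊕ Y → ℝ} (h : IsGlueMetric δ) (a : X ⊕ Y) :
    Continuous fun x : X => δ a (Sum.inl x) := by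
  refine (LipschitzWith.of_dist_le_mul (K := 1) fun x x' => ?_).continuous
  rw [Real.dist_eq, NNReal.coe_one, one_mul, ← h.restr_left]
  exact h.abs_sub a _ _

lemma IsGlueMetric.contRight {δ : X ⊕ Y → X ⊕ Y → ℝ} (h : IsGlueMetric δ) (a : X ⊕ Y) :
    Continuous fun y : Y => δ a (Sum.inr y) := by
  refine (LipschitzWith.of_dist_le_mul (K := 1) fun y y' => ?_).continuous
  rw [Real.dist_eq, NNReal.coe_one, one_mul, ← h.restr_right]
  exact h.abs_sub a _ _

/-- The image under `Sum.inl` of a closed set satisfies the "closedness" condition used in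
the Prokhorov distance, for any glue metric. -/
lemma IsGlueMetric.closed_cond [CompactSpace X] {δ : X ⊕ Y → X ⊕ Y → ℝ}
    (h : IsGlueMetric δ) {K : Set X} (hK : IsClosed K) :
    ∀ a ∉ Sum.inl '' K, ∃ η > 0, ∀ b ∈ Sum.inl '' K, η ≤ δ a b := by
  rintro (x | y) ha
  · have hx : x ∉ K := fun h' => ha ⟨x, h', rfl⟩
    rcases K.eq_empty_or_nonempty with rfl | hne
    · exact ⟨1, one_pos, by rintro b ⟨x', hx', rfl⟩; exact absurd hx' (notMem_empty x')⟩
    · refine ⟨Metric.infDist x K, (hK.notMem_iff_infDist_pos hne).1 hx, ?_⟩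
      rintro b ⟨x', hx', rfl⟩
      rw [h.restr_left]
      exact Metric.infDist_le_dist_of_mem hx'
  · rcases K.eq_empty_or_nonempty with rfl | hne
    · exact ⟨1, one_pos, by rintro b ⟨x', hx', rfl⟩; exact absurd hx' (notMem_empty x')⟩
    · obtain ⟨x₀, hx₀K, hmin⟩ := (hK.isCompact).exists_isMinOn hne
        ((h.contLeft (Sum.inr y)).continuousOn)
      refine ⟨δ (Sum.inr y) (Sum.inl x₀), h.pos _ _ (by simp), ?_⟩
      rintro b ⟨x', hx', rfl⟩
      exact hmin hx'

/-- The set defining the Hausdorff distance for a glue metric on compact nonempty spaces is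
nonempty. -/
lemma IsGlueMetric.hset_nonempty [CompactSpace X] [CompactSpace Y] [Nonempty X] [Nonempty Y]
    {δ : X ⊕ Y → X ⊕ Y → ℝ} (h : IsGlueMetric δ) :
    {ε : ℝ | 0 < ε ∧ (∀ x : X, ∃ y : Y, δ (Sum.inl x) (Sum.inr y) < ε) ∧
      (∀ y : Y, ∃ x : X, δ (Sum.inl x) (Sum.inr y) < ε)}.Nonempty := by
  obtain ⟨y₀⟩ := ‹Nonempty Y›
  obtain ⟨x₀⟩ := ‹Nonempty X›
  obtain ⟨x₁, -, hx₁⟩ := isCompact_univ.exists_isMaxOn univ_nonempty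
    ((h.contLeft (Sum.inr y₀)).continuousOn (s := univ))
  obtain ⟨y₁, -, hy₁⟩ := isCompact_univ.exists_isMaxOn univ_nonempty
    ((h.contRight (Sum.inl x₀)).continuousOn (s := univ))
  have n1 := h.nonneg (Sum.inr y₀) (Sum.inl x₁)
  have n2 := h.nonneg (Sum.inl x₀) (Sum.inr y₁)
  refine ⟨δ (Sum.inr y₀) (Sum.inl x₁) + δ (Sum.inl x₀) (Sum.inr y₁) + 1, by linarith, ?_, ?_⟩
  · intro x
    have h1 : δ (Sum.inr y₀) (Sum.inl x) ≤ δ (Sum.inr y₀) (Sum.inl x₁) := hx₁ (mem_univ x)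
    have h2 := h.symm (Sum.inl x) (Sum.inr y₀)
    exact ⟨y₀, by linarith⟩
  · intro y
    have h1 : δ (Sum.inl x₀) (Sum.inr y) ≤ δ (Sum.inl x₀) (Sum.inr y₁) := hy₁ (mem_univ y)
    exact ⟨x₀, by linarith⟩

end Helpers
section Constructions

variable {X Y Z : Type*} [MetricSpace X] [MetricSpace Y] [MetricSpace Z]

/-- A basic glue metric on `X ⊕ Y` obtained from base points. -/
noncomputable def baseGlue (x₀ : X) (y₀ : Y) : X ⊕ Y → X ⊕ Y → ℝ
  | Sum.inl x, Sum.inl x' => dist x x'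
  | Sum.inl x, Sum.inr y => dist x x₀ + 1 + dist y₀ y
  | Sum.inr y, Sum.inl x => dist x x₀ + 1 + dist y₀ y
  | Sum.inr y, Sum.inr y' => dist y y'

lemma isGlueMetric_baseGlue (x₀ : X) (y₀ : Y) : IsGlueMetric (baseGlue x₀ y₀) := by
  constructor
  · rintro (x | y) <;> exact dist_self _
  · rintro (x | y) (x' | y') hne <;> simp only [baseGlue]
    · exact dist_pos.2 fun h => hne (by rw [h])
    · have := dist_nonneg (x := x) (y := x₀); have := dist_nonneg (x := y₀) (y := y')
      linarith
    · have := dist_nonneg (x := x') (y := x₀); have := dist_nonneg (x := y₀) (y := y)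
      linarith
    · exact dist_pos.2 fun h => hne (by rw [h])
  · rintro (x | y) (x' | y') <;> simp only [baseGlue]
    · exact dist_comm _ _
    · exact dist_comm _ _
  · rintro (x | y) (x' | y') (x'' | y'') <;> simp only [baseGlue]
    · exact dist_triangle _ _ _
    · linarith [dist_triangle x x' x₀]
    · linarith [dist_triangle x x₀ x'', dist_comm x₀ x'', dist_nonneg (x := y₀) (y := y')]
    · linarith [dist_triangle y₀ y' y'']
    · linarith [dist_triangle x'' x' x₀, dist_comm x'' x']
    · linarith [dist_triangle y y₀ y'', dist_comm y y₀, dist_nonneg (x := x') (y := x₀)]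
    · linarith [dist_triangle y₀ y' y, dist_comm y' y]
    · exact dist_triangle _ _ _
  · intro x x'; rfl
  · intro y y'; rfl

/-- The cross distance between `x : X` and `z : Z` obtained by composing glue metrics
through `Y`. -/
noncomputable def crossD (δ₁ : X ⊕ Y → X ⊕ Y → ℝ) (δ₂ : Y ⊕ Z → Y ⊕ Z → ℝ)
    [Nonempty Y] (x : X) (z : Z) : ℝ :=
  ⨅ y : Y, δ₁ (Sum.inl x) (Sum.inr y) + δ₂ (Sum.inl y) (Sum.inr z)

variable [Nonempty Y] {δ₁ : X ⊕ Y → X ⊕ Y → ℝ} {δ₂ : Y ⊕ Z → Y ⊕ Z → ℝ}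

lemma crossD_le (h₁ : IsGlueMetric δ₁) (h₂ : IsGlueMetric δ₂) (x : X) (z : Z) (y : Y) :
    crossD δ₁ δ₂ x z ≤ δ₁ (Sum.inl x) (Sum.inr y) + δ₂ (Sum.inl y) (Sum.inr z) := by
  refine ciInf_le ⟨0, ?_⟩ y
  rintro r ⟨y', rfl⟩
  exact add_nonneg (h₁.nonneg _ _) (h₂.nonneg _ _)

lemma crossD_exists [CompactSpace Y] (h₁ : IsGlueMetric δ₁) (h₂ : IsGlueMetric δ₂)
    (x : X) (z : Z) :
    ∃ y : Y, crossD δ₁ δ₂ x z = δ₁ (Sum.inl x) (Sum.inr y) + δ₂ (Sum.inl y) (Sum.inr z) := by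
  have hc : Continuous fun y : Y => δ₁ (Sum.inl x) (Sum.inr y) + δ₂ (Sum.inl y) (Sum.inr z) := by
    have c2 : Continuous fun y : Y => δ₂ (Sum.inl y) (Sum.inr z) := by
      have := h₂.contLeft (Sum.inr z)
      convert this using 1
      funext y
      exact h₂.symm _ _
    exact (h₁.contRight (Sum.inl x)).add c2
  obtain ⟨y₀, -, hy₀⟩ := isCompact_univ.exists_isMinOn univ_nonempty hc.continuousOn
  refine ⟨y₀, le_antisymm (crossD_le h₁ h₂ x z y₀) (le_ciInf fun y => ?_)⟩
  exact hy₀ (mem_univ y)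

/-- The composite glue metric on `X ⊕ Z`. -/
noncomputable def compGlue (δ₁ : X ⊕ Y → X ⊕ Y → ℝ) (δ₂ : Y ⊕ Z → Y ⊕ Z → ℝ) :
    X ⊕ Z → X ⊕ Z → ℝ
  | Sum.inl x, Sum.inl x' => dist x x'
  | Sum.inl x, Sum.inr z => crossD δ₁ δ₂ x z
  | Sum.inr z, Sum.inl x => crossD δ₁ δ₂ x z
  | Sum.inr z, Sum.inr z' => dist z z'

lemma isGlueMetric_compGlue [CompactSpace Y] (h₁ : IsGlueMetric δ₁) (h₂ : IsGlueMetric δ₂) :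
    IsGlueMetric (compGlue δ₁ δ₂) := by
  constructor
  · rintro (x | z) <;> exact dist_self _
  · rintro (x | z) (x' | z') hne
    · exact dist_pos.2 fun h => hne (by rw [h])
    · obtain ⟨y, hy⟩ := crossD_exists h₁ h₂ x z'
      have p1 := h₁.pos (Sum.inl x) (Sum.inr y) (by simp)
      have p2 := h₂.pos (Sum.inl y) (Sum.inr z') (by simp)
      show (0:ℝ) < crossD δ₁ δ₂ x z'; rw [hy]; linarith
    · obtain ⟨y, hy⟩ := crossD_exists h₁ h₂ x' z
      have p1 := h₁.pos (Sum.inl x') (Sum.inr y) (by simp)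
      have p2 := h₂.pos (Sum.inl y) (Sum.inr z) (by simp)
      show (0:ℝ) < crossD δ₁ δ₂ x' z; rw [hy]; linarith
    · exact dist_pos.2 fun h => hne (by rw [h])
  · rintro (x | z) (x' | z')
    · exact dist_comm _ _
    · rfl
    · rfl
    · exact dist_comm _ _
  · rintro (x | z) (x' | z') (x'' | z'')
    · exact dist_triangle _ _ _
    · -- crossD x z'' ≤ dist x x' + crossD x' z''
      obtain ⟨y, hy⟩ := crossD_exists h₁ h₂ x' z''
      have hle := crossD_le h₁ h₂ x z'' y
      have ht := h₁.triangle (Sum.inl x) (Sum.inl x') (Sum.inr y)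
      rw [h₁.restr_left] at ht
      show crossD δ₁ δ₂ x z'' ≤ dist x x' + crossD δ₁ δ₂ x' z''; linarith
    · -- dist x x'' ≤ crossD x z' + crossD x'' z'
      obtain ⟨y, hy⟩ := crossD_exists h₁ h₂ x z'
      obtain ⟨y', hy'⟩ := crossD_exists h₁ h₂ x'' z'
      have t1 := h₁.triangle (Sum.inl x) (Sum.inr y) (Sum.inl x'')
      have t2 := h₁.triangle (Sum.inr y) (Sum.inr y') (Sum.inl x'')
      have t3 := h₂.triangle (Sum.inl y) (Sum.inr z') (Sum.inl y')
      have e1 := h₁.restr_left x x''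
      have e2 := h₁.restr_right y y'
      have e3 := h₂.restr_left y y'
      have s1 := h₁.symm (Sum.inr y') (Sum.inl x'')
      have s2 := h₂.symm (Sum.inr z') (Sum.inl y')
      show dist x x'' ≤ crossD δ₁ δ₂ x z' + crossD δ₁ δ₂ x'' z'; rw [hy, hy']; linarith
    · -- crossD x z'' ≤ crossD x z' + dist z' z''
      obtain ⟨y, hy⟩ := crossD_exists h₁ h₂ x z'
      have hle := crossD_le h₁ h₂ x z'' y
      have ht := h₂.triangle (Sum.inl y) (Sum.inr z') (Sum.inr z'')
      rw [h₂.restr_right] at ht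
      show crossD δ₁ δ₂ x z'' ≤ crossD δ₁ δ₂ x z' + dist z' z''; linarith
    · -- crossD x'' z ≤ crossD x' z + dist x' x''
      obtain ⟨y, hy⟩ := crossD_exists h₁ h₂ x' z
      have hle := crossD_le h₁ h₂ x'' z y
      have ht := h₁.triangle (Sum.inl x'') (Sum.inl x') (Sum.inr y)
      rw [h₁.restr_left] at ht
      have hd := dist_comm x'' x'
      show crossD δ₁ δ₂ x'' z ≤ crossD δ₁ δ₂ x' z + dist x' x''; linarith
    · -- dist z z'' ≤ crossD x' z + crossD x' z''
      obtain ⟨y, hy⟩ := crossD_exists h₁ h₂ x' z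
      obtain ⟨y', hy'⟩ := crossD_exists h₁ h₂ x' z''
      have t1 := h₂.triangle (Sum.inr z) (Sum.inl y) (Sum.inr z'')
      have t2 := h₂.triangle (Sum.inl y) (Sum.inl y') (Sum.inr z'')
      have t3 := h₁.triangle (Sum.inr y) (Sum.inl x') (Sum.inr y')
      have e1 := h₂.restr_right z z''
      have e2 := h₂.restr_left y y'
      have e3 := h₁.restr_right y y'
      have s1 := h₂.symm (Sum.inr z) (Sum.inl y)
      have s2 := h₁.symm (Sum.inr y) (Sum.inl x')
      show dist z z'' ≤ crossD δ₁ δ₂ x' z + crossD δ₁ δ₂ x' z''; rw [hy, hy']; linarith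
    · -- crossD x'' z ≤ dist z z' + crossD x'' z'
      obtain ⟨y, hy⟩ := crossD_exists h₁ h₂ x'' z'
      have hle := crossD_le h₁ h₂ x'' z y
      have ht := h₂.triangle (Sum.inl y) (Sum.inr z') (Sum.inr z)
      rw [h₂.restr_right] at ht
      have hd := dist_comm z' z
      show crossD δ₁ δ₂ x'' z ≤ dist z z' + crossD δ₁ δ₂ x'' z'; linarith
    · exact dist_triangle _ _ _
  · intro x x'; rfl
  · intro z z'; rfl

end Constructions
section Main

lemma sInf_le_sInf_add_sInf {S T U : Set ℝ} (hS : S.Nonempty) (hT : T.Nonempty)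
    (hU : ∀ s ∈ S, ∀ t ∈ T, sInf U ≤ s + t) : sInf U ≤ sInf S + sInf T := by
  have h1 : ∀ s ∈ S, sInf U - s ≤ sInf T :=
    fun s hs => le_csInf hT fun t ht => by linarith [hU s hs t ht]
  have h2 : sInf U - sInf T ≤ sInf S := le_csInf hS fun s hs => by linarith [h1 s hs]
  linarith

variable {X Y : Type*} [MetricSpace X] [MetricSpace Y]
  [MeasurableSpace X] [MeasurableSpace Y]

/-- The set defining the Prokhorov distance is nonempty for probability measures. -/
lemma glue_pset_nonempty (δ : X ⊕ Y → X ⊕ Y → ℝ) (μ : Measure X) (ν : Measure Y)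
    [IsProbabilityMeasure μ] :
    {ε : ℝ | 0 < ε ∧ ∀ C : Set (X ⊕ Y),
      (∀ a ∉ C, ∃ η > 0, ∀ b ∈ C, η ≤ δ a b) →
      μ (Sum.inl ⁻¹' C) ≤ ν (Sum.inr ⁻¹' {a | ∃ b ∈ C, δ a b < ε}) + ENNReal.ofReal ε}.Nonempty := by
  refine ⟨1, one_pos, fun C _ => ?_⟩
  calc μ (Sum.inl ⁻¹' C) ≤ 1 := prob_le_one
    _ = ENNReal.ofReal 1 := by simp
    _ ≤ _ := self_le_add_left _ _

lemma glueHausdorffDist_nonneg (δ : X ⊕ Y → X ⊕ Y → ℝ) : 0 ≤ glueHausdorffDist δ :=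
  Real.sInf_nonneg fun _ hx => hx.1.le

lemma glueProkhorovDist_nonneg (δ : X ⊕ Y → X ⊕ Y → ℝ) (μ : Measure X) (ν : Measure Y) :
    0 ≤ glueProkhorovDist δ μ ν :=
  Real.sInf_nonneg fun _ hx => hx.1.le

lemma ghpDist_bddBelow (μ : Measure X) (ν : Measure Y) :
    BddBelow {r : ℝ | ∃ δ : X ⊕ Y → X ⊕ Y → ℝ, IsGlueMetric δ ∧
      r = max (glueHausdorffDist δ) (glueProkhorovDist δ μ ν)} := by
  refine ⟨0, ?_⟩
  rintro r ⟨δ, -, rfl⟩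
  exact le_max_of_le_left (glueHausdorffDist_nonneg δ)

end Main
section Subadd

variable {X Y Z : Type*} [MetricSpace X] [MetricSpace Y] [MetricSpace Z]
  [CompactSpace X] [CompactSpace Y] [CompactSpace Z]
  [Nonempty X] [Nonempty Y] [Nonempty Z]
  {δ₁ : X ⊕ Y → X ⊕ Y → ℝ} {δ₂ : Y ⊕ Z → Y ⊕ Z → ℝ}

lemma hausdorff_subadd (h₁ : IsGlueMetric δ₁) (h₂ : IsGlueMetric δ₂) :
    glueHausdorffDist (compGlue δ₁ δ₂) ≤ glueHausdorffDist δ₁ + glueHausdorffDist δ₂ := by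
  refine sInf_le_sInf_add_sInf h₁.hset_nonempty h₂.hset_nonempty fun s hs t ht => ?_
  refine csInf_le ⟨0, fun r hr => hr.1.le⟩ ⟨by linarith [hs.1, ht.1], fun x => ?_, fun z => ?_⟩
  · obtain ⟨y, hy⟩ := hs.2.1 x
    obtain ⟨z, hz⟩ := ht.2.1 y
    refine ⟨z, ?_⟩
    show crossD δ₁ δ₂ x z < s + t
    exact lt_of_le_of_lt (crossD_le h₁ h₂ x z y) (by linarith)
  · obtain ⟨y, hy⟩ := ht.2.2 z
    obtain ⟨x, hx⟩ := hs.2.2 y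
    refine ⟨x, ?_⟩
    show crossD δ₁ δ₂ x z < s + t
    exact lt_of_le_of_lt (crossD_le h₁ h₂ x z y) (by linarith)

lemma prokhorov_subadd [MeasurableSpace X] [MeasurableSpace Y] [MeasurableSpace Z]
    (h₁ : IsGlueMetric δ₁) (h₂ : IsGlueMetric δ₂)
    (μ : Measure X) (μ' : Measure Y) (μ'' : Measure Z)
    [IsProbabilityMeasure μ] [IsProbabilityMeasure μ'] :
    glueProkhorovDist (compGlue δ₁ δ₂) μ μ'' ≤
      glueProkhorovDist δ₁ μ μ' + glueProkhorovDist δ₂ μ' μ'' := by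
  refine sInf_le_sInf_add_sInf (glue_pset_nonempty δ₁ μ μ') (glue_pset_nonempty δ₂ μ' μ'')
    fun s hs t ht => ?_
  refine csInf_le ⟨0, fun r hr => hr.1.le⟩ ⟨by linarith [hs.1, ht.1], fun C hC => ?_⟩
  set A : Set X := Sum.inl ⁻¹' C with hA
  have hAcl : IsClosed A := by
    rw [← isOpen_compl_iff, Metric.isOpen_iff]
    intro x hx
    obtain ⟨η, hη, hηle⟩ := hC (Sum.inl x) hx
    refine ⟨η, hη, fun x' hx' => ?_⟩
    simp only [mem_compl_iff]
    intro hx'A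
    have h1 : η ≤ dist x x' := hηle (Sum.inl x') hx'A
    have h2 : dist x' x < η := Metric.mem_ball.1 hx'
    rw [dist_comm] at h2
    linarith
  have step1 := hs.2 (Sum.inl '' A) (h₁.closed_cond hAcl)
  rw [Set.preimage_image_eq A Sum.inl_injective] at step1
  set B : Set Y := Sum.inr ⁻¹' {a : X ⊕ Y | ∃ b ∈ Sum.inl '' A, δ₁ a b < s} with hB
  have step2 := ht.2 (Sum.inl '' closure B) (h₂.closed_cond isClosed_closure)
  rw [Set.preimage_image_eq _ Sum.inl_injective] at step2
  have hsub : (Sum.inr ⁻¹' {a : Y ⊕ Z | ∃ b ∈ Sum.inl '' closure B, δ₂ a b < t}) ⊆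
      (Sum.inr ⁻¹' {a : X ⊕ Z | ∃ b ∈ C, compGlue δ₁ δ₂ a b < s + t}) := by
    rintro z ⟨b, ⟨y, hyK, rfl⟩, hzb⟩
    have hr : 0 < t - δ₂ (Sum.inr z) (Sum.inl y) := by linarith
    obtain ⟨y', hy'B, hyy'⟩ := Metric.mem_closure_iff.1 hyK _ hr
    obtain ⟨b₁, ⟨x, hxA, rfl⟩, hy'b⟩ := hy'B
    refine ⟨Sum.inl x, hxA, ?_⟩
    have hle := crossD_le h₁ h₂ x z y'
    have t2 := h₂.triangle (Sum.inl y') (Sum.inl y) (Sum.inr z)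
    have e2 := h₂.restr_left y' y
    have s1 := h₁.symm (Sum.inr y') (Sum.inl x)
    have s2 := h₂.symm (Sum.inl y) (Sum.inr z)
    have hd : dist y' y = dist y y' := dist_comm _ _
    show crossD δ₁ δ₂ x z < s + t
    linarith
  calc μ (Sum.inl ⁻¹' C)
      ≤ μ' B + ENNReal.ofReal s := step1
    _ ≤ μ' (closure B) + ENNReal.ofReal s := by
        exact add_le_add_left (measure_mono subset_closure) _
    _ ≤ (μ'' (Sum.inr ⁻¹' {a : Y ⊕ Z | ∃ b ∈ Sum.inl '' closure B, δ₂ a b < t}) +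
          ENNReal.ofReal t) + ENNReal.ofReal s := add_le_add_left step2 _
    _ ≤ (μ'' (Sum.inr ⁻¹' {a : X ⊕ Z | ∃ b ∈ C, compGlue δ₁ δ₂ a b < s + t}) +
          ENNReal.ofReal t) + ENNReal.ofReal s := by
        exact add_le_add_left (add_le_add_left (measure_mono hsub) _) _
    _ = _ := by
        rw [add_assoc, ← ENNReal.ofReal_add ht.1.le hs.1.le, add_comm t s]

end Subadd
/-- The Gromov–Hausdorff–Prokhorov distance satisfies the triangle inequality. -/
theorem ghpDist_triangle
    {X Y Z : Type*} [MetricSpace X] [MetricSpace Y] [MetricSpace Z]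
    [CompactSpace X] [CompactSpace Y] [CompactSpace Z]
    [Nonempty X] [Nonempty Y] [Nonempty Z]
    [MeasurableSpace X] [BorelSpace X] [MeasurableSpace Y] [BorelSpace Y]
    [MeasurableSpace Z] [BorelSpace Z]
    (μ : Measure X) (μ' : Measure Y) (μ'' : Measure Z)
    [IsProbabilityMeasure μ] [IsProbabilityMeasure μ'] [IsProbabilityMeasure μ''] :
    ghpDist μ μ'' ≤ ghpDist μ μ' + ghpDist μ' μ'' := by
  refine le_of_forall_pos_le_add fun ε hε => ?_
  have hne₁ : Set.Nonempty {r : ℝ | ∃ δ : X ⊕ Y → X ⊕ Y → ℝ, IsGlueMetric δ ∧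
      r = max (glueHausdorffDist δ) (glueProkhorovDist δ μ μ')} :=
    ⟨_, baseGlue (Classical.arbitrary X) (Classical.arbitrary Y), isGlueMetric_baseGlue _ _, rfl⟩
  have hne₂ : Set.Nonempty {r : ℝ | ∃ δ : Y ⊕ Z → Y ⊕ Z → ℝ, IsGlueMetric δ ∧
      r = max (glueHausdorffDist δ) (glueProkhorovDist δ μ' μ'')} :=
    ⟨_, baseGlue (Classical.arbitrary Y) (Classical.arbitrary Z), isGlueMetric_baseGlue _ _, rfl⟩
  obtain ⟨r₁, hr₁mem, hr₁⟩ := Real.lt_sInf_add_pos hne₁ (half_pos hε)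
  obtain ⟨δ₁, h₁, hr₁eq⟩ := hr₁mem
  obtain ⟨r₂, hr₂mem, hr₂⟩ := Real.lt_sInf_add_pos hne₂ (half_pos hε)
  obtain ⟨δ₂, h₂, hr₂eq⟩ := hr₂mem
  have hH := hausdorff_subadd h₁ h₂
  have hP := prokhorov_subadd h₁ h₂ μ μ' μ''
  have hle : ghpDist μ μ'' ≤ max (glueHausdorffDist (compGlue δ₁ δ₂))
      (glueProkhorovDist (compGlue δ₁ δ₂) μ μ'') :=
    csInf_le (ghpDist_bddBelow μ μ'') ⟨compGlue δ₁ δ₂, isGlueMetric_compGlue h₁ h₂, rfl⟩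
  have key : max (glueHausdorffDist (compGlue δ₁ δ₂))
      (glueProkhorovDist (compGlue δ₁ δ₂) μ μ'') ≤ r₁ + r₂ := by
    refine max_le (hH.trans ?_) (hP.trans ?_)
    · rw [hr₁eq, hr₂eq]; exact add_le_add (le_max_left _ _) (le_max_left _ _)
    · rw [hr₁eq, hr₂eq]; exact add_le_add (le_max_right _ _) (le_max_right _ _)
  have e1 : ghpDist μ μ' = sInf {r : ℝ | ∃ δ : X ⊕ Y → X ⊕ Y → ℝ, IsGlueMetric δ ∧
      r = max (glueHausdorffDist δ) (glueProkhorovDist δ μ μ')} := rfl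
  have e2 : ghpDist μ' μ'' = sInf {r : ℝ | ∃ δ : Y ⊕ Z → Y ⊕ Z → ℝ, IsGlueMetric δ ∧
      r = max (glueHausdorffDist δ) (glueProkhorovDist δ μ' μ'')} := rfl
  rw [e1, e2]
  linarith
end

section
/- Let (X,d), (X',d'), (X'',d'') be nonempty compact metric spaces with Borel probability measures μ, μ', μ''. Let ℛ_1 be a compact correspondence between X and X' and ℛ_2 a compact correspondence between X' and X'', and let ν_1 be a coupling of μ and μ' and ν_2 a coupling of μ' and μ''. Then the composition ℛ_3 := {(x,x'') ∈ X × X'' : ∃ x' ∈ X', (x,x') ∈ ℛ_1 and (x',x'') ∈ ℛ_2} is a compact correspondence between X and X'' with dis ℛ_3 ≤ dis ℛ_1 + dis ℛ_2, and there exists a coupling ν_3 of μ and μ'' with ν_3((ℛ_3)^c) ≤ ν_1((ℛ_1)^c) + ν_2((ℛ_2)^c), where A^c denotes the complement. -/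
open MeasureTheory

section Corr

variable {X Y : Type*}

/-- A correspondence between `X` and `Y`. -/
def IsCorrespondence (R : Set (X × Y)) : Prop :=
  (∀ x : X, ∃ y : Y, (x, y) ∈ R) ∧ (∀ y : Y, ∃ x : X, (x, y) ∈ R)

/-- The distortion of a correspondence. -/
noncomputable def distortion [MetricSpace X] [MetricSpace Y] (R : Set (X × Y)) : ℝ :=
  sSup {r : ℝ | ∃ p ∈ R, ∃ q ∈ R, r = |dist p.1 q.1 - dist p.2 q.2|}

/-- A coupling of `μ` and `μ'`: a measure on the product with the given marginals. -/
def IsCoupling [MeasurableSpace X] [MeasurableSpace Y]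
    (ν : Measure (X × Y)) (μ : Measure X) (μ' : Measure Y) : Prop :=
  Measure.map Prod.fst ν = μ ∧ Measure.map Prod.snd ν = μ'

end Corr


open ProbabilityTheory in
lemma distortion_bddAbove {X Y : Type*} [MetricSpace X] [MetricSpace Y]
    [CompactSpace X] [CompactSpace Y] (R : Set (X × Y)) :
    BddAbove {r : ℝ | ∃ p ∈ R, ∃ q ∈ R, r = |dist p.1 q.1 - dist p.2 q.2|} := by
  refine ⟨Metric.diam (Set.univ : Set X) + Metric.diam (Set.univ : Set Y), ?_⟩
  rintro r ⟨p, hp, q, hq, rfl⟩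
  calc |dist p.1 q.1 - dist p.2 q.2| ≤ |dist p.1 q.1| + |dist p.2 q.2| := abs_sub _ _
  _ ≤ _ := by
      rw [abs_of_nonneg dist_nonneg, abs_of_nonneg dist_nonneg]
      exact add_le_add
        (Metric.dist_le_diam_of_mem isCompact_univ.isBounded trivial trivial)
        (Metric.dist_le_diam_of_mem isCompact_univ.isBounded trivial trivial)

open ProbabilityTheory in
/-- Composition of compact correspondences and of couplings: the composed
correspondence is a compact correspondence whose distortion is at most the sum of the
distortions, and there is a coupling of the outer measures giving the composed
correspondence's complement a mass at most the sum of the masses of the complements. -/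
theorem composition_of_correspondences_and_couplings
    {X Y Z : Type*} [MetricSpace X] [MetricSpace Y] [MetricSpace Z]
    [CompactSpace X] [CompactSpace Y] [CompactSpace Z]
    [Nonempty X] [Nonempty Y] [Nonempty Z]
    [MeasurableSpace X] [BorelSpace X] [MeasurableSpace Y] [BorelSpace Y]
    [MeasurableSpace Z] [BorelSpace Z]
    (μ : Measure X) (μ' : Measure Y) (μ'' : Measure Z)
    [IsProbabilityMeasure μ] [IsProbabilityMeasure μ'] [IsProbabilityMeasure μ'']
    (R₁ : Set (X × Y)) (R₂ : Set (Y × Z))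
    (hR₁c : IsCompact R₁) (hR₁ : IsCorrespondence R₁)
    (hR₂c : IsCompact R₂) (hR₂ : IsCorrespondence R₂)
    (ν₁ : Measure (X × Y)) (hν₁ : IsCoupling ν₁ μ μ')
    (ν₂ : Measure (Y × Z)) (hν₂ : IsCoupling ν₂ μ' μ'') :
    IsCompact {p : X × Z | ∃ y : Y, (p.1, y) ∈ R₁ ∧ (y, p.2) ∈ R₂} ∧
    IsCorrespondence {p : X × Z | ∃ y : Y, (p.1, y) ∈ R₁ ∧ (y, p.2) ∈ R₂} ∧
    distortion {p : X × Z | ∃ y : Y, (p.1, y) ∈ R₁ ∧ (y, p.2) ∈ R₂} ≤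
      distortion R₁ + distortion R₂ ∧
    ∃ ν₃ : Measure (X × Z), IsCoupling ν₃ μ μ'' ∧
      ν₃ {p : X × Z | ∃ y : Y, (p.1, y) ∈ R₁ ∧ (y, p.2) ∈ R₂}ᶜ ≤ ν₁ R₁ᶜ + ν₂ R₂ᶜ := by
  set R₃ := {p : X × Z | ∃ y : Y, (p.1, y) ∈ R₁ ∧ (y, p.2) ∈ R₂} with hR₃def
  -- Compactness
  have hT : IsCompact {q : (X × Y) × Z | q.1 ∈ R₁ ∧ (q.1.2, q.2) ∈ R₂} := by
    have hcl : IsClosed {q : (X × Y) × Z | q.1 ∈ R₁ ∧ (q.1.2, q.2) ∈ R₂} :=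
      (hR₁c.isClosed.preimage continuous_fst).inter
        (hR₂c.isClosed.preimage ((continuous_snd.comp continuous_fst).prodMk continuous_snd))
    exact hcl.isCompact
  have himg : R₃ = (fun q : (X × Y) × Z => (q.1.1, q.2)) ''
      {q : (X × Y) × Z | q.1 ∈ R₁ ∧ (q.1.2, q.2) ∈ R₂} := by
    ext ⟨x, z⟩
    constructor
    · rintro ⟨y, h1, h2⟩; exact ⟨((x, y), z), ⟨h1, h2⟩, rfl⟩
    · rintro ⟨⟨⟨x', y⟩, z'⟩, ⟨h1, h2⟩, heq⟩
      obtain ⟨rfl, rfl⟩ := Prod.mk.injEq .. ▸ heq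
      exact ⟨y, h1, h2⟩
  have hR₃c : IsCompact R₃ := by
    rw [himg]
    exact hT.image ((continuous_fst.comp continuous_fst).prodMk continuous_snd)
  refine ⟨hR₃c, ?_, ?_, ?_⟩
  · -- correspondence
    constructor
    · intro x
      obtain ⟨y, hy⟩ := hR₁.1 x
      obtain ⟨z, hz⟩ := hR₂.1 y
      exact ⟨z, y, hy, hz⟩
    · intro z
      obtain ⟨y, hy⟩ := hR₂.2 z
      obtain ⟨x, hx⟩ := hR₁.2 y
      exact ⟨x, y, hx, hy⟩
  · -- distortion
    have hnn : (0:ℝ) ≤ distortion R₁ + distortion R₂ := by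
      apply add_nonneg <;>
        exact Real.sSup_nonneg (by rintro r ⟨p, hp, q, hq, rfl⟩; exact abs_nonneg _)
    refine Real.sSup_le ?_ hnn
    rintro r ⟨⟨x₁, z₁⟩, ⟨y₁, hy₁, hz₁⟩, ⟨x₂, z₂⟩, ⟨y₂, hy₂, hz₂⟩, rfl⟩
    calc |dist x₁ x₂ - dist z₁ z₂|
        ≤ |dist x₁ x₂ - dist y₁ y₂| + |dist y₁ y₂ - dist z₁ z₂| := abs_sub_le _ _ _
      _ ≤ distortion R₁ + distortion R₂ := by
          refine add_le_add ?_ ?_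
          · exact le_csSup (distortion_bddAbove R₁) ⟨(x₁, y₁), hy₁, (x₂, y₂), hy₂, rfl⟩
          · exact le_csSup (distortion_bddAbove R₂) ⟨(y₁, z₁), hz₁, (y₂, z₂), hz₂, rfl⟩
  · -- coupling
    obtain ⟨h1f, h1s⟩ := hν₁
    obtain ⟨h2f, h2s⟩ := hν₂
    haveI : IsProbabilityMeasure ν₁ := by
      constructor
      rw [← Set.preimage_univ (f := (Prod.fst : X × Y → X)),
        ← Measure.map_apply measurable_fst MeasurableSet.univ, h1f]
      exact measure_univ
    haveI : IsProbabilityMeasure ν₂ := by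
      constructor
      rw [← Set.preimage_univ (f := (Prod.fst : Y × Z → Y)),
        ← Measure.map_apply measurable_fst MeasurableSet.univ, h2f]
      exact measure_univ
    set κ := ν₂.condKernel with hκ
    have hfst2 : ν₂.fst = μ' := h2f
    have hdis : μ' ⊗ₘ κ = ν₂ := by rw [← hfst2]; exact ν₂.disintegrate ν₂.condKernel
    set η : Kernel (X × Y) Z := κ.comap Prod.snd measurable_snd with hη
    haveI : IsMarkovKernel η := by rw [hη]; infer_instance
    set m := ν₁ ⊗ₘ η with hm
    have hh : Measurable (fun q : (X × Y) × Z => (q.1.2, q.2)) :=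
      (measurable_snd.comp measurable_fst).prodMk measurable_snd
    have hg : Measurable (fun q : (X × Y) × Z => (q.1.1, q.2)) :=
      (measurable_fst.comp measurable_fst).prodMk measurable_snd
    have hmapfst : m.map Prod.fst = ν₁ := Measure.fst_compProd ν₁ η
    have hmaph : m.map (fun q : (X × Y) × Z => (q.1.2, q.2)) = ν₂ := by
      rw [← hdis]
      ext s hs
      rw [Measure.map_apply hh hs, hm, Measure.compProd_apply (hh hs),
        Measure.compProd_apply hs]
      have : ∀ p : X × Y, η p (Prod.mk p ⁻¹' ((fun q : (X × Y) × Z => (q.1.2, q.2)) ⁻¹' s))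
          = κ p.2 (Prod.mk p.2 ⁻¹' s) := by
        intro p; rfl
      simp_rw [this]
      rw [← lintegral_map (Kernel.measurable_kernel_prodMk_left hs) measurable_snd, h1s]
    refine ⟨m.map (fun q : (X × Y) × Z => (q.1.1, q.2)), ⟨?_, ?_⟩, ?_⟩
    · rw [Measure.map_map measurable_fst hg]
      have : (Prod.fst ∘ fun q : (X × Y) × Z => (q.1.1, q.2))
          = Prod.fst ∘ (Prod.fst : (X × Y) × Z → X × Y) := rfl
      rw [this, ← Measure.map_map measurable_fst measurable_fst, hmapfst, h1f]
    · rw [Measure.map_map measurable_snd hg]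
      have : (Prod.snd ∘ fun q : (X × Y) × Z => (q.1.1, q.2))
          = Prod.snd ∘ (fun q : (X × Y) × Z => (q.1.2, q.2)) := rfl
      rw [this, ← Measure.map_map measurable_snd hh, hmaph, h2s]
    · have hR₃m : MeasurableSet R₃ᶜ := hR₃c.isClosed.measurableSet.compl
      rw [Measure.map_apply hg hR₃m]
      have hsub : (fun q : (X × Y) × Z => (q.1.1, q.2)) ⁻¹' R₃ᶜ ⊆
          (Prod.fst ⁻¹' R₁ᶜ) ∪ ((fun q : (X × Y) × Z => (q.1.2, q.2)) ⁻¹' R₂ᶜ) := by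
        rintro ⟨⟨x, y⟩, z⟩ hq
        by_contra hc
        simp only [Set.mem_union, Set.mem_preimage, Set.mem_compl_iff, not_or, not_not] at hc
        exact hq ⟨y, hc.1, hc.2⟩
      calc m ((fun q : (X × Y) × Z => (q.1.1, q.2)) ⁻¹' R₃ᶜ)
          ≤ m ((Prod.fst ⁻¹' R₁ᶜ) ∪ ((fun q : (X × Y) × Z => (q.1.2, q.2)) ⁻¹' R₂ᶜ)) :=
            measure_mono hsub
        _ ≤ m (Prod.fst ⁻¹' R₁ᶜ) + m ((fun q : (X × Y) × Z => (q.1.2, q.2)) ⁻¹' R₂ᶜ) :=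
            measure_union_le _ _
        _ = ν₁ R₁ᶜ + ν₂ R₂ᶜ := by
            rw [← Measure.map_apply measurable_fst hR₁c.isClosed.measurableSet.compl,
              ← Measure.map_apply hh hR₂c.isClosed.measurableSet.compl, hmapfst, hmaph]
end

section
/- Let (X_n, d_n, μ_n), n ≥ 1, be nonempty compact metric spaces with Borel probability measures converging to (X, d, μ) in the Gromov–Hausdorff–Prokhorov distance, i.e. d_GHP((X_n,d_n,μ_n),(X,d,μ)) → 0. If lim_{ε↓0} liminf_{n→∞} ∫_{X_n} μ_n(B(x,ε)) μ_n(dx) = 0, where B(x,ε) is the open ball of radius ε around x, then μ is a diffuse measure (μ has no atoms: μ({x}) = 0 for every x ∈ X). -/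
open MeasureTheory Set
open scoped ENNReal

section GHP

variable {X Y : Type*}

/-- A glue metric always exists. -/
lemma exists_isGlueMetric [MetricSpace X] [MetricSpace Y] [Nonempty X] [Nonempty Y] :
    ∃ δ : X ⊕ Y → X ⊕ Y → ℝ, IsGlueMetric δ := by
  obtain ⟨x0⟩ := ‹Nonempty X›
  obtain ⟨y0⟩ := ‹Nonempty Y›
  refine ⟨fun a b => match a, b with
    | Sum.inl x, Sum.inl x' => dist x x'
    | Sum.inr y, Sum.inr y' => dist y y'
    | Sum.inl x, Sum.inr y => dist x x0 + 1 + dist y y0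
    | Sum.inr y, Sum.inl x => dist x x0 + 1 + dist y y0, ?_, ?_, ?_, ?_, ?_, ?_⟩
  · rintro (x | y) <;> simp
  · rintro (x | y) (x' | y') h <;> simp_all <;> positivity
  · rintro (x | y) (x' | y') <;> simp [dist_comm]
  · rintro (a | a) (b | b) (c | c) <;> simp only
    · exact dist_triangle a b c
    · linarith [dist_triangle a b x0]
    · linarith [dist_triangle a x0 c, dist_comm x0 c, dist_nonneg (x := b) (y := y0)]
    · linarith [dist_triangle c b y0, dist_comm b c]
    · linarith [dist_triangle c b x0, dist_comm b c]
    · linarith [dist_triangle a y0 c, dist_comm y0 c, dist_nonneg (x := b) (y := x0)]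
    · linarith [dist_triangle a b y0]
    · exact dist_triangle a b c
  · intro x x'; rfl
  · intro y y'; rfl

/-- The admissible set defining the Prokhorov part is nonempty (it contains `2`). -/
lemma prokhorov_set_nonempty [MetricSpace X] [MetricSpace Y]
    [MeasurableSpace X] [MeasurableSpace Y]
    (δ : X ⊕ Y → X ⊕ Y → ℝ) (μ : Measure X) (ν : Measure Y) [IsProbabilityMeasure μ] :
    (2 : ℝ) ∈ {ε : ℝ | 0 < ε ∧ ∀ C : Set (X ⊕ Y),
      (∀ a ∉ C, ∃ η > 0, ∀ b ∈ C, η ≤ δ a b) →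
      μ (Sum.inl ⁻¹' C) ≤ ν (Sum.inr ⁻¹' {a | ∃ b ∈ C, δ a b < ε}) + ENNReal.ofReal ε} := by
  refine ⟨by norm_num, fun C _ => ?_⟩
  have h1 : μ (Sum.inl ⁻¹' C) ≤ 1 := prob_le_one
  have h2 : (1 : ℝ≥0∞) ≤ ENNReal.ofReal 2 := by
    rw [ENNReal.ofReal_ofNat]; exact one_le_two
  exact h1.trans (h2.trans le_add_self)

end GHP

open Filter

/-- If compact metric measure spaces `(X_n, d_n, μ_n)` converge to `(Y, d, ν)` in the
Gromov–Hausdorff–Prokhorov distance and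
`lim_{ε↓0} liminf_n ∫_{X_n} μ_n(B(x,ε)) μ_n(dx) = 0`, then `ν` is diffuse. -/
theorem limit_measure_diffuse
    (X : ℕ → Type*) [∀ n, MetricSpace (X n)] [∀ n, CompactSpace (X n)]
    [∀ n, Nonempty (X n)] [∀ n, MeasurableSpace (X n)] [∀ n, BorelSpace (X n)]
    (μ : ∀ n, Measure (X n)) [∀ n, IsProbabilityMeasure (μ n)]
    (Y : Type*) [MetricSpace Y] [CompactSpace Y] [Nonempty Y]
    [MeasurableSpace Y] [BorelSpace Y]
    (ν : Measure Y) [IsProbabilityMeasure ν]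
    (hconv : Tendsto (fun n => ghpDist (μ n) ν) atTop (nhds 0))
    (hsmall : Tendsto
      (fun ε : ℝ => liminf (fun n => ∫⁻ x, μ n (Metric.ball x ε) ∂ μ n) atTop)
      (nhdsWithin 0 (Set.Ioi 0)) (nhds 0)) :
    ∀ y : Y, ν {y} = 0 := by
  intro y
  by_contra hy
  set c : ℝ := (ν {y}).toReal with hcdef
  have hνy : ν {y} = ENNReal.ofReal c := (ENNReal.ofReal_toReal (measure_ne_top ν _)).symm
  have hc0 : 0 < c := ENNReal.toReal_pos hy (measure_ne_top ν _)
  set K : ℝ≥0∞ := ENNReal.ofReal (c / 2) * ENNReal.ofReal (c / 2) with hKdef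
  have hKpos : 0 < K := by
    have := ENNReal.ofReal_pos.mpr (half_pos hc0)
    exact ENNReal.mul_pos this.ne' this.ne'
  -- the key lower bound on the liminfs, for every radius ε > 0
  have key : ∀ ε ∈ Ioi (0 : ℝ),
      K ≤ liminf (fun n => ∫⁻ x, μ n (Metric.ball x ε) ∂ μ n) atTop := by
    intro ε hε
    have hεpos : (0 : ℝ) < ε := hε
    set s : ℝ := ε / 2 with hsdef
    have hs : 0 < s := by positivity
    set ε₀ : ℝ := min s (c / 2) with hε₀def
    have hε₀pos : 0 < ε₀ := lt_min hs (half_pos hc0)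
    have hev : ∀ᶠ n in atTop, ghpDist (μ n) ν < ε₀ :=
      Filter.Tendsto.eventually_lt_const hε₀pos hconv
    refine le_liminf_of_le (by isBoundedDefault) ?_
    filter_upwards [hev] with n hn
    -- extract a glue metric realizing the GHP distance within ε₀
    obtain ⟨δ0, hδ0⟩ := exists_isGlueMetric (X := X n) (Y := Y)
    have hne : {r : ℝ | ∃ δ : X n ⊕ Y → X n ⊕ Y → ℝ, IsGlueMetric δ ∧
        r = max (glueHausdorffDist δ) (glueProkhorovDist δ (μ n) ν)}.Nonempty :=
      ⟨_, δ0, hδ0, rfl⟩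
    obtain ⟨r, ⟨δ, hδ, hr⟩, hrlt⟩ := exists_lt_of_csInf_lt hne hn
    have hP : glueProkhorovDist δ (μ n) ν < ε₀ :=
      lt_of_le_of_lt (hr ▸ le_max_right _ _) hrlt
    obtain ⟨e, ⟨hepos, hC⟩, helt⟩ :=
      exists_lt_of_csInf_lt ⟨2, prokhorov_set_nonempty δ (μ n) ν⟩ hP
    have hes : e < s := lt_of_lt_of_le helt (min_le_left _ _)
    have hec : e ≤ c / 2 := le_of_lt (lt_of_lt_of_le helt (min_le_right _ _))
    -- the (open) "ball" around the image of y in X n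
    set A : Set (X n) := {x | δ (Sum.inl x) (Sum.inr y) < s} with hAdef
    have hf : Continuous fun x : X n => δ (Sum.inl x) (Sum.inr y) := by
      refine (LipschitzWith.of_dist_le_mul (K := 1) fun x x' => ?_).continuous
      rw [Real.dist_eq, NNReal.coe_one, one_mul]
      rw [abs_sub_le_iff]
      constructor
      · have := hδ.triangle (Sum.inl x) (Sum.inl x') (Sum.inr y)
        rw [hδ.restr_left] at this; linarith
      · have := hδ.triangle (Sum.inl x') (Sum.inl x) (Sum.inr y)
        rw [hδ.restr_left, dist_comm] at this; linarith
    have hAopen : IsOpen A := isOpen_lt hf continuous_const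
    have hAmeas : MeasurableSet A := hAopen.measurableSet
    -- the closed set C₀ : complement of the s-ball around the image of y
    set C₀ : Set (X n ⊕ Y) := {a | s ≤ δ a (Sum.inr y)} with hC₀def
    have hCsep : ∀ a ∉ C₀, ∃ η > 0, ∀ b ∈ C₀, η ≤ δ a b := by
      intro a ha
      have ha' : δ a (Sum.inr y) < s := not_le.mp ha
      refine ⟨s - δ a (Sum.inr y), by linarith, fun b hb => ?_⟩
      have hb' : s ≤ δ b (Sum.inr y) := hb
      have := hδ.triangle b a (Sum.inr y)
      have hsym := hδ.symm a b
      linarith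
    have hineq := hC C₀ hCsep
    have h1 : Sum.inl ⁻¹' C₀ = Aᶜ := by
      ext x; simp [hC₀def, hAdef, not_lt]
    have h2 : Sum.inr ⁻¹' {a | ∃ b ∈ C₀, δ a b < e} ⊆ {y}ᶜ := by
      intro y' hy'
      obtain ⟨b, hb, hlt⟩ := hy'
      intro hmem
      rw [mem_singleton_iff] at hmem
      subst hmem
      have hb' : s ≤ δ b (Sum.inr y') := hb
      rw [hδ.symm] at hlt
      linarith
    have hsum1 : ν {y} + ν {y}ᶜ = 1 := by
      rw [measure_add_measure_compl (measurableSet_singleton y), measure_univ]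
    have hsum2 : μ n A + μ n Aᶜ = 1 := by
      rw [measure_add_measure_compl hAmeas, measure_univ]
    have hstep : μ n Aᶜ ≤ ν {y}ᶜ + ENNReal.ofReal e := by
      calc μ n Aᶜ = μ n (Sum.inl ⁻¹' C₀) := by rw [h1]
        _ ≤ ν (Sum.inr ⁻¹' {a | ∃ b ∈ C₀, δ a b < e}) + ENNReal.ofReal e := hineq
        _ ≤ ν {y}ᶜ + ENNReal.ofReal e := add_le_add_left (measure_mono h2) _
    have hkey : ν {y} ≤ μ n A + ENNReal.ofReal e := by
      have h3 : ν {y} + ν {y}ᶜ ≤ (μ n A + ENNReal.ofReal e) + ν {y}ᶜ := by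
        calc ν {y} + ν {y}ᶜ = μ n A + μ n Aᶜ := by rw [hsum1, hsum2]
          _ ≤ μ n A + (ν {y}ᶜ + ENNReal.ofReal e) := add_le_add_right hstep _
          _ = (μ n A + ENNReal.ofReal e) + ν {y}ᶜ := by ring
      exact (ENNReal.add_le_add_iff_right (measure_ne_top ν _)).mp h3
    have hA : ENNReal.ofReal (c / 2) ≤ μ n A := by
      have h4 : ENNReal.ofReal c ≤ μ n A + ENNReal.ofReal (c / 2) := by
        rw [← hνy]
        exact hkey.trans (add_le_add_right (ENNReal.ofReal_le_ofReal hec) _)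
      have h5 : ENNReal.ofReal (c - c / 2) ≤ μ n A := by
        rw [ENNReal.ofReal_sub c (by positivity)]
        exact tsub_le_iff_right.mpr h4
      rwa [show c - c / 2 = c / 2 by ring] at h5
    -- A has diameter < ε, so it sits inside every ε-ball around its points
    have hball : ∀ x ∈ A, A ⊆ Metric.ball x ε := by
      intro x hx x' hx'
      have hx1 : δ (Sum.inl x) (Sum.inr y) < s := hx
      have hx2 : δ (Sum.inl x') (Sum.inr y) < s := hx'
      rw [Metric.mem_ball]
      have := hδ.triangle (Sum.inl x') (Sum.inr y) (Sum.inl x)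
      rw [hδ.restr_left] at this
      have hsym := hδ.symm (Sum.inl x) (Sum.inr y)
      linarith
    calc K ≤ μ n A * μ n A := mul_le_mul' hA hA
      _ = ∫⁻ x, A.indicator (fun _ => μ n A) x ∂ μ n := by
          rw [lintegral_indicator_const hAmeas]
      _ ≤ ∫⁻ x, μ n (Metric.ball x ε) ∂ μ n := by
          refine lintegral_mono fun x => ?_
          by_cases hx : x ∈ A
          · simpa [hx] using measure_mono (hball x hx)
          · simp [hx]
  -- contradiction with hsmall
  have h1 : ∀ᶠ ε in nhdsWithin (0 : ℝ) (Ioi 0),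
      liminf (fun n => ∫⁻ x, μ n (Metric.ball x ε) ∂ μ n) atTop < K :=
    Filter.Tendsto.eventually_lt_const hKpos hsmall
  have h2 : ∀ᶠ ε in nhdsWithin (0 : ℝ) (Ioi 0), ε ∈ Ioi (0 : ℝ) :=
    self_mem_nhdsWithin
  obtain ⟨ε, hlt, hmem⟩ := (h1.and h2).exists
  exact absurd (key ε hmem) (not_le.mpr hlt)
end
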